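/- Let n ≥ 4 and let κ_1, …, κ_{n−1} be real numbers with 0 < κ_1 ≤ κ_2 ≤ κ_3 ≤ ⋯ ≤ κ_{n−1} and κ_p > κ_1 for all p ≥ 3. Set H = Σ_{p=1}^{n−1} κ_p. If a_1, …, a_{n−1} are real numbers satisfying κ_2 a_1 + κ_1 a_2 = 0, then κ_2 (Σ_{p=1}^{n−1} a_p)² + H (a_1 a_2 − a_2²) ≤ H κ_2 Σ_{p=3}^{n−1} a_p²/(κ_p − κ_1). -/

import Mathlib

lemma key_ineq (κ1 κ2 a1 a2 S K T H : ℝ) (h1 : 0 < κ1) (h12 : κ1 ≤ κ2)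
    (hc : κ2 * a1 + κ1 * a2 = 0) (hK : 0 < K) (hT : 0 ≤ T) (hCS : S ^ 2 ≤ K * T)
    (hH : 2 * κ1 + κ2 + K ≤ H) :
    κ2 * (a1 + a2 + S) ^ 2 + H * (a1 * a2 - a2 ^ 2) ≤ H * κ2 * T := by
  set P : ℝ := κ1 + κ2 with hP
  set u : ℝ := κ2 - κ1 with hu
  have hPpos : 0 < P := by rw [hP]; linarith
  have hκ2 : 0 < κ2 := lt_of_lt_of_le h1 h12
  have hupos : 0 ≤ u := by simp [hu]; linarith
  have hA : P * (u * a2 + κ2 * S) ^ 2 ≤ (u ^ 2 + K * P) * (P * a2 ^ 2 + κ2 ^ 2 * T) := by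
    nlinarith [sq_nonneg (u * κ2 * S - K * P * a2),
      mul_nonneg (mul_nonneg (by positivity : (0:ℝ) ≤ u ^ 2 + K * P) (sq_nonneg κ2))
        (by linarith : (0:ℝ) ≤ K * T - S ^ 2), hK, mul_pos hK hPpos]
  have hB : u ^ 2 + K * P ≤ H * P := by
    nlinarith [mul_nonneg (by linarith : (0:ℝ) ≤ H - (2 * κ1 + κ2 + K)) hPpos.le,
      mul_pos h1 hκ2, sq_nonneg κ1]
  have h3 : 0 ≤ P * a2 ^ 2 + κ2 ^ 2 * T := by positivity
  have hfinal : (u * a2 + κ2 * S) ^ 2 ≤ H * (P * a2 ^ 2 + κ2 ^ 2 * T) := by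
    have h4 := hA.trans (mul_le_mul_of_nonneg_right hB h3)
    nlinarith [h4, hPpos]
  have hexp : κ2 * (κ2 * (a1 + a2 + S) ^ 2 + H * (a1 * a2 - a2 ^ 2))
      = (u * a2 + κ2 * S) ^ 2 - H * P * a2 ^ 2 := by
    linear_combination (κ2 * (a1 + a2 + S) + u * a2 + κ2 * S + H * a2) * hc
  rw [← mul_le_mul_iff_right₀ hκ2, hexp]
  nlinarith [hfinal]

theorem gradient_estimate_general (n : ℕ) (hn : 4 ≤ n) (κ a : Fin (n - 1) → ℝ)
    (hpos : 0 < κ ⟨0, by omega⟩) (hmono : Monotone κ)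
    (hgap : ∀ p : Fin (n - 1), 2 ≤ (p : ℕ) → κ ⟨0, by omega⟩ < κ p)
    (hconstr : κ ⟨1, by omega⟩ * a ⟨0, by omega⟩ + κ ⟨0, by omega⟩ * a ⟨1, by omega⟩ = 0) :
    κ ⟨1, by omega⟩ * (∑ p, a p) ^ 2
        + (∑ p, κ p) * (a ⟨0, by omega⟩ * a ⟨1, by omega⟩ - a ⟨1, by omega⟩ ^ 2)
      ≤ (∑ p, κ p) * κ ⟨1, by omega⟩ *
          ∑ p ∈ Finset.univ.filter (fun p : Fin (n - 1) => 2 ≤ (p : ℕ)),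
            a p ^ 2 / (κ p - κ ⟨0, by omega⟩) := by
  set i0 : Fin (n - 1) := ⟨0, by omega⟩ with hi0
  set i1 : Fin (n - 1) := ⟨1, by omega⟩ with hi1
  set s : Finset (Fin (n - 1)) := Finset.univ.filter (fun p : Fin (n - 1) => 2 ≤ (p : ℕ))
    with hs
  have hmem : ∀ p : Fin (n - 1), p ∈ s ↔ 2 ≤ (p : ℕ) := by
    intro p; simp [hs]
  have hi0s : i0 ∉ s := by simp [hmem, hi0]
  have hi1s : i1 ∉ s := by simp [hmem, hi1]
  have hne : i0 ≠ i1 := by simp [hi0, hi1, Fin.ext_iff]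
  have huniv : (Finset.univ : Finset (Fin (n - 1))) = insert i0 (insert i1 s) := by
    ext p
    simp only [Finset.mem_univ, Finset.mem_insert, hmem, true_iff, hi0, hi1, Fin.ext_iff]
    omega
  have hsplit : ∀ f : Fin (n - 1) → ℝ, ∑ p, f p = f i0 + f i1 + ∑ p ∈ s, f p := by
    intro f
    rw [huniv, Finset.sum_insert (by simp [Finset.mem_insert, hne, hi0s]),
      Finset.sum_insert hi1s]
    ring
  -- positivity of gaps on s
  have hgap' : ∀ p ∈ s, 0 < κ p - κ i0 := by
    intro p hp
    have := hgap p ((hmem p).1 hp)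
    linarith
  -- abbreviations
  set S : ℝ := ∑ p ∈ s, a p with hS
  set K : ℝ := ∑ p ∈ s, (κ p - κ i0) with hK
  set T : ℝ := ∑ p ∈ s, a p ^ 2 / (κ p - κ i0) with hT
  have hsne : s.Nonempty := ⟨⟨2, by omega⟩, (hmem _).2 (by simp)⟩
  have hKpos : 0 < K := Finset.sum_pos hgap' hsne
  have hTnn : 0 ≤ T :=
    Finset.sum_nonneg fun p hp => div_nonneg (sq_nonneg _) (hgap' p hp).le
  have hCS : S ^ 2 ≤ K * T := by
    have := Finset.sq_sum_div_le_sum_sq_div s a hgap'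
    rw [div_le_iff₀ hKpos] at this
    calc S ^ 2 ≤ T * K := this
      _ = K * T := mul_comm _ _
  have h12 : κ i0 ≤ κ i1 := hmono (by simp [hi0, hi1, Fin.mk_le_mk])
  have hH : 2 * κ i0 + κ i1 + K ≤ ∑ p, κ p := by
    rw [hsplit κ]
    have hcard : 1 ≤ s.card := Finset.one_le_card.2 hsne
    have : ∑ p ∈ s, κ p = K + s.card * κ i0 := by
      rw [hK, Finset.sum_sub_distrib, Finset.sum_const, nsmul_eq_mul]
      ring
    rw [this]
    have : (1 : ℝ) ≤ s.card := by exact_mod_cast hcard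
    nlinarith [hpos]
  have := key_ineq (κ i0) (κ i1) (a i0) (a i1) S K T (∑ p, κ p)
    hpos h12 hconstr hKpos hTnn hCS hH
  rw [hsplit a]
  convert this using 2
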